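/- For any formal Fourier series f (i.e., any function \hat{f}: ℤ → ℂ), the subspace of radial vectors ℂ_rad^{B_n(T_q)} ⊂ ℂ^{B_n(T_q)} is invariant under the truncated branching-Toeplitz operator Γ_q^{(n)}[f], and with respect to the orthonormal basis h_k = 1_{S_k}/√(q^k), k = 0, ..., n, the restriction of Γ_q^{(n)}[f] to ℂ_rad^{B_n(T_q)} has matrix representation equal to the standard Toeplitz matrix T_n(f) = [\hat{f}(k - l)]_{0 ≤ k,l ≤ n}. In particular, Γ_q^{(n)}[f] h_l = Σ_{k=0}^n \hat{f}(k - l) h_k. -/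

import Mathlib

/-- Vertices of the rooted `q`-homogeneous tree, modelled as words over `Fin q`;
the root is the empty word and the children of `w` are the words `k :: w`. -/
abbrev Vertex (q : ℕ) := List (Fin q)

/-- `σ` is an ancestor of `τ` (i.e. `σ ⪯ τ`): `τ = w ++ σ` for some word `w`. -/
def Anc {q : ℕ} (σ τ : Vertex q) : Prop := σ <:+ τ

/-- Two vertices are comparable (`(σ,τ) ∈ 𝒞`) if one is an ancestor of the other. -/
def Comp {q : ℕ} (σ τ : Vertex q) : Prop := σ <:+ τ ∨ τ <:+ σ

/-- Length of the longest common suffix, i.e. the generation of the last common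
ancestor of the two vertices. -/
def lcs {q : ℕ} (σ τ : Vertex q) : ℕ :=
  ((σ.reverse.zip τ.reverse).takeWhile (fun p => decide (p.1 = p.2))).length

/-- The graph distance on the rooted `q`-homogeneous tree. -/
def tdist {q : ℕ} (σ τ : Vertex q) : ℕ := (σ.length - lcs σ τ) + (τ.length - lcs σ τ)

instance {q : ℕ} (σ τ : Vertex q) : Decidable (Comp σ τ) :=
  inferInstanceAs (Decidable (σ <:+ τ ∨ τ <:+ σ))

/-- The branching-Toeplitz kernel
`Γ_q[f](σ₁,σ₂) = q^{-d(σ₁,σ₂)/2} · f̂(|σ₁|-|σ₂|) · 1_𝒞(σ₁,σ₂)` associated with a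
formal Fourier series with coefficients `f̂ : ℤ → ℂ`. -/
noncomputable def btKer {q : ℕ} (f : ℤ → ℂ) (σ₁ σ₂ : Vertex q) : ℂ :=
  if Comp σ₁ σ₂ then
    ((q : ℝ) ^ (-(tdist σ₁ σ₂ : ℝ) / 2) : ℝ) * f ((σ₁.length : ℤ) - σ₂.length) else 0

/-- The ball `B_n(T_q)` of vertices of generation at most `n`. -/
abbrev Ball (q n : ℕ) := {σ : Vertex q // σ.length ≤ n}

noncomputable instance (q n : ℕ) : Fintype (Ball q n) :=
  (List.finite_length_le (Fin q) n).fintype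

/-- The truncated branching-Toeplitz matrix `Γ_q^{(n)}[f]` on `B_n(T_q)`. -/
noncomputable def btMat (q n : ℕ) (f : ℤ → ℂ) : Matrix (Ball q n) (Ball q n) ℂ :=
  fun σ₁ σ₂ => btKer f σ₁.1 σ₂.1

/-- The standard Toeplitz matrix `T_n(f) = [f̂(k-l)]_{0 ≤ k,l ≤ n}`. -/
def toepMat (n : ℕ) (f : ℤ → ℂ) : Matrix (Fin (n + 1)) (Fin (n + 1)) ℂ :=
  fun k l => f ((k : ℤ) - (l : ℤ))

/-- The orthonormal radial vectors `h_k = 1_{S_k} / √(q^k)` in `ℂ^{B_n(T_q)}`. -/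
noncomputable def radBasis (q n : ℕ) (k : ℕ) : Ball q n → ℂ :=
  fun σ => if σ.1.length = k then ((Real.sqrt ((q : ℝ) ^ k))⁻¹ : ℝ) else 0

lemma aux_takeWhile1 {α : Type*} [DecidableEq α] (a b : List α) :
    (((a ++ b).zip a).takeWhile (fun p => decide (p.1 = p.2))).length = a.length := by
  induction a with
  | nil => simp
  | cons x a ih => simpa [List.takeWhile_cons] using ih

lemma aux_takeWhile2 {α : Type*} [DecidableEq α] (a b : List α) :
    ((a.zip (a ++ b)).takeWhile (fun p => decide (p.1 = p.2))).length = a.length := by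
  induction a with
  | nil => simp
  | cons x a ih => simpa [List.takeWhile_cons] using ih

lemma lcs_suffix_right {q : ℕ} {σ τ : Vertex q} (h : τ <:+ σ) : lcs σ τ = τ.length := by
  obtain ⟨w, rfl⟩ := h
  unfold lcs
  rw [List.reverse_append]
  simpa using aux_takeWhile1 τ.reverse w.reverse

lemma lcs_suffix_left {q : ℕ} {σ τ : Vertex q} (h : σ <:+ τ) : lcs σ τ = σ.length := by
  obtain ⟨w, rfl⟩ := h
  unfold lcs
  rw [List.reverse_append]
  simpa using aux_takeWhile2 σ.reverse w.reverse

lemma tdist_suffix_right {q : ℕ} {σ τ : Vertex q} (h : τ <:+ σ) :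
    tdist σ τ = σ.length - τ.length := by
  unfold tdist; rw [lcs_suffix_right h]; omega

lemma tdist_suffix_left {q : ℕ} {σ τ : Vertex q} (h : σ <:+ τ) :
    tdist σ τ = τ.length - σ.length := by
  unfold tdist; rw [lcs_suffix_left h]; omega

lemma suffix_eq_drop {q : ℕ} {σ τ : Vertex q} (h : τ <:+ σ) :
    τ = σ.drop (σ.length - τ.length) := by
  obtain ⟨w, rfl⟩ := h
  have : (w ++ τ).length - τ.length = w.length := by simp
  rw [this, List.drop_left]

lemma sum_ker (q n : ℕ) (hq : 1 ≤ q) (f : ℤ → ℂ) (σ : Ball q n) (l : ℕ) (hl : l ≤ n) :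
    ∑ τ ∈ Finset.univ.filter (fun τ : Ball q n => τ.1.length = l), btKer f σ.1 τ.1
      = (((q:ℝ) ^ (((l:ℝ) - (σ.1.length:ℝ))/2) : ℝ) : ℂ) * f ((σ.1.length : ℤ) - l) := by
  set m := σ.1.length with hm
  have hmn : m ≤ n := σ.2
  have hq0 : (0:ℝ) < q := by exact_mod_cast hq
  rcases le_or_gt l m with hlm | hml
  · -- single term τ₀ = σ.drop (m - l)
    have hlen0 : (σ.1.drop (m - l)).length = l := by simp [List.length_drop]; omega
    set τ₀ : Ball q n := ⟨σ.1.drop (m - l), by rw [hlen0]; exact hl⟩ with hτ₀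
    rw [Finset.sum_eq_single τ₀]
    · have hsuf : τ₀.1 <:+ σ.1 := List.drop_suffix _ _
      have hcomp : Comp σ.1 τ₀.1 := Or.inr hsuf
      have htd : tdist σ.1 τ₀.1 = m - l := by rw [tdist_suffix_right hsuf, hlen0]
      rw [btKer, if_pos hcomp, htd, hlen0]
      have h1 : (-((m - l : ℕ) : ℝ) / 2) = ((l:ℝ) - (m:ℝ))/2 := by
        rw [Nat.cast_sub hlm]; ring
      rw [h1]
    · intro τ hτ hne
      simp only [Finset.mem_filter] at hτ
      rw [btKer, if_neg]
      intro hcomp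
      apply hne
      rcases hcomp with h | h
      · have : m ≤ τ.1.length := h.length_le
        have hml' : m = l := le_antisymm (by omega) (by omega)
        have hστ : σ.1 = τ.1 := h.eq_of_length (by omega)
        apply Subtype.ext
        rw [← hστ, hτ₀]
        simp [hml']
      · apply Subtype.ext
        rw [hτ₀]
        have := suffix_eq_drop h
        rw [hτ.2] at this
        exact this.symm ▸ rfl
    · intro h
      exact absurd (Finset.mem_filter.mpr ⟨Finset.mem_univ τ₀, hlen0⟩) h
  · -- q^(l-m) terms
    have hstep : ∑ τ ∈ Finset.univ.filter (fun τ : Ball q n => τ.1.length = l), btKer f σ.1 τ.1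
        = ∑ τ ∈ Finset.univ.filter
            (fun τ : Ball q n => τ.1.length = l ∧ σ.1 <:+ τ.1), btKer f σ.1 τ.1 := by
      rw [← Finset.filter_filter]
      refine (Finset.sum_filter_of_ne ?_).symm
      intro τ hτ hne
      simp only [Finset.mem_filter] at hτ
      rw [btKer] at hne
      by_cases hcomp : Comp σ.1 τ.1
      · rcases hcomp with h | h
        · exact h
        · exact absurd (h.length_le) (by omega)
      · rw [if_neg hcomp] at hne; exact absurd rfl hne
    rw [hstep]
    set c : ℂ := (((q:ℝ) ^ (-((l - m : ℕ):ℝ) / 2) : ℝ) : ℂ) * f ((m : ℤ) - l) with hc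
    have hconst : ∀ τ ∈ Finset.univ.filter
        (fun τ : Ball q n => τ.1.length = l ∧ σ.1 <:+ τ.1), btKer f σ.1 τ.1 = c := by
      intro τ hτ
      simp only [Finset.mem_filter] at hτ
      have hcomp : Comp σ.1 τ.1 := Or.inl hτ.2.2
      rw [btKer, if_pos hcomp, tdist_suffix_left hτ.2.2, hτ.2.1, ← hm]
    rw [Finset.sum_congr rfl hconst, Finset.sum_const]
    have hcard : (Finset.univ.filter
        (fun τ : Ball q n => τ.1.length = l ∧ σ.1 <:+ τ.1)).card = q ^ (l - m) := by
      have hbij : (Finset.univ.filter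
          (fun τ : Ball q n => τ.1.length = l ∧ σ.1 <:+ τ.1))
          = Finset.image (fun w : List.Vector (Fin q) (l - m) =>
              (⟨w.1 ++ σ.1, by simp only [List.length_append, w.2]; omega⟩ : Ball q n))
              Finset.univ := by
        ext τ
        simp only [Finset.mem_filter, Finset.mem_image, Finset.mem_univ, true_and]
        constructor
        · rintro ⟨hτl, u, hu⟩
          have hul : u.length = l - m := by
            have := congrArg List.length hu
            simp only [List.length_append] at this
            omega
          exact ⟨⟨u, hul⟩, Subtype.ext hu⟩
        · rintro ⟨w, rfl⟩
          refine ⟨by simp only [List.length_append, w.2]; omega, ⟨w.1, rfl⟩⟩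
      rw [hbij, Finset.card_image_of_injective _ (fun a b h => by
          apply Subtype.ext
          exact List.append_cancel_right (congrArg Subtype.val h : a.1 ++ σ.1 = b.1 ++ σ.1)),
        Finset.card_univ, card_vector, Fintype.card_fin]
    rw [hcard, nsmul_eq_mul, hc]
    have harg : ((m : ℤ) - l) = ((σ.1.length : ℤ) - l) := by rw [hm]
    rw [harg]
    have hreal : ((q ^ (l - m) : ℕ) : ℝ) * ((q:ℝ) ^ (-((l - m : ℕ):ℝ) / 2)) 
        = (q:ℝ) ^ (((l:ℝ) - (m:ℝ))/2) := by
      rw [Nat.cast_pow, ← Real.rpow_natCast (q:ℝ) (l - m), ← Real.rpow_add hq0]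
      congr 1
      rw [Nat.cast_sub hml.le]
      ring
    push_cast [← hreal]
    ring

lemma mulVec_radial_eq (q n : ℕ) (hq : 1 ≤ q) (f : ℤ → ℂ) (v : Ball q n → ℂ) (g : ℕ → ℂ)
    (hv : ∀ τ : Ball q n, v τ = g τ.1.length) (σ : Ball q n) :
    (btMat q n f).mulVec v σ
      = ∑ l ∈ Finset.range (n + 1),
          (((q:ℝ) ^ (((l:ℝ) - (σ.1.length:ℝ))/2) : ℝ) : ℂ) * f ((σ.1.length : ℤ) - l) * g l := by
  have h0 : (btMat q n f).mulVec v σ = ∑ τ : Ball q n, btKer f σ.1 τ.1 * v τ := by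
    simp [Matrix.mulVec, dotProduct, btMat]
  rw [h0, ← Finset.sum_fiberwise_of_maps_to (g := fun τ : Ball q n => τ.1.length)
    (t := Finset.range (n + 1)) (fun τ _ => by simpa using Nat.lt_succ_of_le τ.2)]
  refine Finset.sum_congr rfl ?_
  intro l hl
  have h1 : ∀ τ ∈ Finset.univ.filter (fun τ : Ball q n => τ.1.length = l),
      btKer f σ.1 τ.1 * v τ = btKer f σ.1 τ.1 * g l := by
    intro τ hτ
    rw [hv τ, (Finset.mem_filter.mp hτ).2]
  rw [Finset.sum_congr rfl h1, ← Finset.sum_mul,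
    sum_ker q n hq f σ l (by simpa using Nat.lt_succ_iff.mp (Finset.mem_range.mp hl))]

lemma sqrt_calc (q : ℕ) (hq : 1 ≤ q) (l m : ℕ) :
    (q:ℝ) ^ (((l:ℝ) - (m:ℝ))/2) * (Real.sqrt ((q:ℝ) ^ l))⁻¹ = (Real.sqrt ((q:ℝ) ^ m))⁻¹ := by
  have hq0 : (0:ℝ) < q := by exact_mod_cast hq
  rw [Real.sqrt_eq_rpow, Real.sqrt_eq_rpow, ← Real.rpow_natCast (q:ℝ) l,
    ← Real.rpow_natCast (q:ℝ) m, ← Real.rpow_mul hq0.le, ← Real.rpow_mul hq0.le,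
    ← Real.rpow_neg hq0.le, ← Real.rpow_neg hq0.le, ← Real.rpow_add hq0]
  congr 1
  ring

/-- The radial subspace of `ℂ^{B_n(T_q)}` is invariant under the
truncated branching-Toeplitz operator `Γ_q^{(n)}[f]`, and in the orthonormal basis
`h_0, …, h_n` its restriction is the Toeplitz matrix `T_n(f)`; explicitly
`Γ_q^{(n)}[f] h_l = Σ_{k=0}^n f̂(k-l) h_k`. -/
theorem btMat_radial (q n : ℕ) (hq : 2 ≤ q) (hn : 1 ≤ n) (f : ℤ → ℂ) :
    (∀ v : Ball q n → ℂ,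
      (∀ σ τ : Ball q n, σ.1.length = τ.1.length → v σ = v τ) →
      ∀ σ τ : Ball q n, σ.1.length = τ.1.length →
        (btMat q n f).mulVec v σ = (btMat q n f).mulVec v τ) ∧
    (∀ l : ℕ, l ≤ n →
      (btMat q n f).mulVec (radBasis q n l) =
        ∑ k ∈ Finset.range (n + 1), f ((k : ℤ) - (l : ℤ)) • radBasis q n k) := by
  have hq1 : 1 ≤ q := by omega
  constructor
  · intro v hrad σ τ hlen
    set g : ℕ → ℂ := fun k =>
      if hk : k ≤ n then v ⟨List.replicate k ⟨0, by omega⟩, by simpa using hk⟩ else 0 with hg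
    have hv : ∀ ρ : Ball q n, v ρ = g ρ.1.length := by
      intro ρ
      rw [hg]
      simp only [ρ.2, dif_pos]
      exact hrad ρ _ (by simp)
    rw [mulVec_radial_eq q n hq1 f v g hv σ, mulVec_radial_eq q n hq1 f v g hv τ, hlen]
  · intro l hl
    funext σ
    set m := σ.1.length with hm
    have hmn : m ≤ n := σ.2
    have hv : ∀ τ : Ball q n, radBasis q n l τ =
        (fun k => if k = l then (((Real.sqrt ((q:ℝ) ^ l))⁻¹ : ℝ) : ℂ) else 0) τ.1.length := by
      intro τ; rfl
    rw [mulVec_radial_eq q n hq1 f (radBasis q n l)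
      (fun k => if k = l then (((Real.sqrt ((q:ℝ) ^ l))⁻¹ : ℝ) : ℂ) else 0) hv σ]
    have hL : ∑ l' ∈ Finset.range (n + 1),
        (((q:ℝ) ^ (((l':ℝ) - (m:ℝ))/2) : ℝ) : ℂ) * f ((m : ℤ) - l') *
          (if l' = l then (((Real.sqrt ((q:ℝ) ^ l))⁻¹ : ℝ) : ℂ) else 0)
        = (((q:ℝ) ^ (((l:ℝ) - (m:ℝ))/2) : ℝ) : ℂ) * f ((m : ℤ) - l) *
            (((Real.sqrt ((q:ℝ) ^ l))⁻¹ : ℝ) : ℂ) := by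
      rw [Finset.sum_eq_single l]
      · simp
      · intro b _ hb; simp [hb]
      · intro h; exact absurd (Finset.mem_range.mpr (by omega)) h
    rw [hL]
    have hR : (∑ k ∈ Finset.range (n + 1), f ((k : ℤ) - (l : ℤ)) • radBasis q n k) σ
        = f ((m : ℤ) - l) * (((Real.sqrt ((q:ℝ) ^ m))⁻¹ : ℝ) : ℂ) := by
      rw [Finset.sum_apply]
      rw [Finset.sum_eq_single m]
      · simp [radBasis, ← hm]
      · intro b _ hb; simp [radBasis, ← hm, Ne.symm hb]
      · intro h; exact absurd (Finset.mem_range.mpr (by omega)) h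
    rw [hR]
    have hc : (((q:ℝ) ^ (((l:ℝ) - (m:ℝ))/2) : ℝ) : ℂ) * (((Real.sqrt ((q:ℝ) ^ l))⁻¹ : ℝ) : ℂ)
        = (((Real.sqrt ((q:ℝ) ^ m))⁻¹ : ℝ) : ℂ) := by
      rw [← Complex.ofReal_mul, sqrt_calc q hq1 l m]
    linear_combination f ((m : ℤ) - l) * hc
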